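/- Fix M > 0 and c_u, c_o > 0, and let q = c_u/(c_u + c_o). For 0 < ε ≤ min(q, 1−q), define the two-point Borel probability measures on [0,M]: μ₊ = (1−q+ε)·δ_M + (q−ε)·δ₀ and μ₋ = (1−q−ε)·δ_M + (q+ε)·δ₀, and let ν̃ = (1−q)·δ_M + q·δ₀. Then d_TV(ν̃,μ₊) = ε and d_TV(ν̃,μ₋) = ε, and for every inventory level x ∈ [0,M], (1/2)·(C(x,μ₊) − opt(μ₊)) + (1/2)·(C(x,μ₋) − opt(μ₋)) = ((c_u + c_o)/2)·M·ε. -/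

import Mathlib

open MeasureTheory

noncomputable section

/-- Expected newsvendor cost with underage cost `cu` and overage cost `co`. -/
def nvCost (cu co x : ℝ) (μ : Measure ℝ) : ℝ :=
  ∫ ξ, (cu * max (ξ - x) 0 + co * max (x - ξ) 0) ∂μ

/-- Optimal newsvendor cost `opt(μ) = inf_{x ∈ [0,M]} C(x,μ)`. -/
def optNv (cu co M : ℝ) (μ : Measure ℝ) : ℝ :=
  ⨅ x : Set.Icc (0:ℝ) M, nvCost cu co x.1 μ

/-- Total variation distance: `sup` over Borel sets `A` of `|μ(A) - ν(A)|`. -/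
def tvDist (μ ν : Measure ℝ) : ℝ :=
  ⨆ A : {A : Set ℝ // MeasurableSet A}, |(μ A.1).toReal - (ν A.1).toReal|

lemma integrable_dirac'' (f : ℝ → ℝ) (hf : Measurable f) (a : ℝ) :
    Integrable f (Measure.dirac a) := by
  refine ⟨hf.aestronglyMeasurable, ?_⟩
  rw [HasFiniteIntegral, lintegral_dirac]
  exact ENNReal.coe_lt_top

lemma integral_two_point (f : ℝ → ℝ) (hf : Measurable f) (a b p r : ℝ)
    (ha : 0 ≤ a) (hb : 0 ≤ b) :
    ∫ ξ, f ξ ∂(ENNReal.ofReal a • Measure.dirac p + ENNReal.ofReal b • Measure.dirac r)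
      = a * f p + b * f r := by
  rw [integral_add_measure ((integrable_dirac'' f hf p).smul_measure ENNReal.ofReal_ne_top)
    ((integrable_dirac'' f hf r).smul_measure ENNReal.ofReal_ne_top),
    integral_smul_measure, integral_smul_measure, integral_dirac, integral_dirac]
  simp [ENNReal.toReal_ofReal, ha, hb]

lemma nv_meas (cu co x : ℝ) :
    Measurable (fun ξ : ℝ => cu * max (ξ - x) 0 + co * max (x - ξ) 0) := by
  fun_prop

lemma nvCost_two_point (cu co x M a b : ℝ) (ha : 0 ≤ a) (hb : 0 ≤ b)
    (hx : x ∈ Set.Icc (0:ℝ) M) :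
    nvCost cu co x (ENNReal.ofReal a • Measure.dirac M + ENNReal.ofReal b • Measure.dirac 0)
      = a * (cu * (M - x)) + b * (co * x) := by
  obtain ⟨hx0, hxM⟩ := hx
  rw [nvCost, integral_two_point _ (nv_meas cu co x) a b M 0 ha hb]
  rw [max_eq_left (by linarith), max_eq_right (by linarith),
    max_eq_right (by linarith), max_eq_left (by linarith)]
  ring

open Classical in
lemma two_point_apply (a b p r : ℝ) (ha : 0 ≤ a) (hb : 0 ≤ b)
    {A : Set ℝ} (hA : MeasurableSet A) :
    (((ENNReal.ofReal a) • Measure.dirac p + (ENNReal.ofReal b) • Measure.dirac r) A).toReal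
      = (if p ∈ A then a else 0) + (if r ∈ A then b else 0) := by
  rw [Measure.add_apply, Measure.smul_apply, Measure.smul_apply,
    Measure.dirac_apply' _ hA, Measure.dirac_apply' _ hA]
  by_cases hp : p ∈ A <;> by_cases hr : r ∈ A <;>
    simp [Set.indicator, hp, hr, ENNReal.toReal_add, ENNReal.toReal_ofReal, ha, hb,
      ENNReal.ofReal_ne_top]

lemma tv_two_point (p r a b a' b' : ℝ) (ha : 0 ≤ a) (hb : 0 ≤ b) (ha' : 0 ≤ a') (hb' : 0 ≤ b')
    (hpr : p ≠ r) (hab : a - a' = -(b - b')) :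
    tvDist ((ENNReal.ofReal a) • Measure.dirac p + (ENNReal.ofReal b) • Measure.dirac r)
      ((ENNReal.ofReal a') • Measure.dirac p + (ENNReal.ofReal b') • Measure.dirac r)
      = |b - b'| := by
  have hbound : ∀ A : {A : Set ℝ // MeasurableSet A},
      |((((ENNReal.ofReal a) • Measure.dirac p + (ENNReal.ofReal b) • Measure.dirac r)) A.1).toReal
        - ((((ENNReal.ofReal a') • Measure.dirac p + (ENNReal.ofReal b') • Measure.dirac r)) A.1).toReal| ≤ |b - b'| := by
    intro ⟨A, hA⟩
    rw [two_point_apply a b p r ha hb hA, two_point_apply a' b' p r ha' hb' hA, abs_le]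
    by_cases hp : p ∈ A <;> by_cases hr : r ∈ A <;>
      simp only [hp, hr, if_true, if_false, ite_true, ite_false] <;>
      constructor <;> linarith [le_abs_self (b - b'), neg_abs_le (b - b')]
  refine le_antisymm (ciSup_le hbound) ?_
  have hbdd : BddAbove (Set.range fun A : {A : Set ℝ // MeasurableSet A} =>
      |((((ENNReal.ofReal a) • Measure.dirac p + (ENNReal.ofReal b) • Measure.dirac r)) A.1).toReal
        - ((((ENNReal.ofReal a') • Measure.dirac p + (ENNReal.ofReal b') • Measure.dirac r)) A.1).toReal|) :=
    ⟨|b - b'|, by rintro y ⟨A, rfl⟩; exact hbound A⟩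
  refine le_ciSup_of_le hbdd ⟨{r}, measurableSet_singleton r⟩ (le_of_eq ?_)
  rw [two_point_apply a b p r ha hb (measurableSet_singleton r),
    two_point_apply a' b' p r ha' hb' (measurableSet_singleton r)]
  simp [hpr]

theorem newsvendor_tv_lower_bound
    (M cu co ε : ℝ) (hM : 0 < M) (hcu : 0 < cu) (hco : 0 < co)
    (q : ℝ) (hq : q = cu / (cu + co))
    (hε : 0 < ε) (hε2 : ε ≤ min q (1 - q))
    (νt μp μm : Measure ℝ)
    (hμp : μp = ENNReal.ofReal (1 - q + ε) • Measure.dirac M +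
                ENNReal.ofReal (q - ε) • Measure.dirac 0)
    (hμm : μm = ENNReal.ofReal (1 - q - ε) • Measure.dirac M +
                ENNReal.ofReal (q + ε) • Measure.dirac 0)
    (hνt : νt = ENNReal.ofReal (1 - q) • Measure.dirac M +
                ENNReal.ofReal q • Measure.dirac 0) :
    tvDist νt μp = ε ∧ tvDist νt μm = ε ∧
    ∀ x ∈ Set.Icc (0:ℝ) M,
      (1/2) * (nvCost cu co x μp - optNv cu co M μp) +
        (1/2) * (nvCost cu co x μm - optNv cu co M μm) =
      ((cu + co) / 2) * M * ε := by
  have hεq : ε ≤ q := le_trans hε2 (min_le_left _ _)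
  have hεq' : ε ≤ 1 - q := le_trans hε2 (min_le_right _ _)
  have hq0 : 0 < q := lt_of_lt_of_le hε hεq
  have hq1 : q < 1 := by linarith
  have hM0 : (M : ℝ) ≠ 0 := ne_of_gt hM
  have hkey : (1 - q) * cu = q * co := by
    rw [hq]; field_simp; ring
  have hxM : (M : ℝ) ∈ Set.Icc (0:ℝ) M := ⟨le_of_lt hM, le_refl M⟩
  have hx0 : (0 : ℝ) ∈ Set.Icc (0:ℝ) M := ⟨le_refl 0, le_of_lt hM⟩
  haveI : Nonempty (Set.Icc (0:ℝ) M) := ⟨⟨0, hx0⟩⟩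
  have hCp : ∀ x ∈ Set.Icc (0:ℝ) M,
      nvCost cu co x μp = (1 - q + ε) * (cu * (M - x)) + (q - ε) * (co * x) := by
    intro x hx
    rw [hμp, nvCost_two_point cu co x M _ _ (by linarith) (by linarith) hx]
  have hCm : ∀ x ∈ Set.Icc (0:ℝ) M,
      nvCost cu co x μm = (1 - q - ε) * (cu * (M - x)) + (q + ε) * (co * x) := by
    intro x hx
    rw [hμm, nvCost_two_point cu co x M _ _ (by linarith) (by linarith) hx]
  have hOp : optNv cu co M μp = (q - ε) * (co * M) := by
    have hlb : ∀ y : Set.Icc (0:ℝ) M, (q - ε) * (co * M) ≤ nvCost cu co y.1 μp := by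
      intro y
      rw [hCp y.1 y.2]
      have h1 := y.2.1; have h2 := y.2.2
      have h5 : (1 - q + ε) * (cu * (M - y.1)) + (q - ε) * (co * y.1) - (q - ε) * (co * M)
          = ε * (cu + co) * (M - y.1) := by linear_combination (M - (y.1:ℝ)) * hkey
      have h6 : 0 ≤ ε * (cu + co) * (M - y.1) :=
        mul_nonneg (by positivity) (by linarith)
      linarith
    refine le_antisymm ?_ (le_ciInf hlb)
    have := ciInf_le ⟨(q - ε) * (co * M), by rintro z ⟨y, rfl⟩; exact hlb y⟩
      (⟨M, hxM⟩ : Set.Icc (0:ℝ) M)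
    rw [hCp M hxM] at this
    simpa [optNv] using this
  have hOm : optNv cu co M μm = (1 - q - ε) * (cu * M) := by
    have hlb : ∀ y : Set.Icc (0:ℝ) M, (1 - q - ε) * (cu * M) ≤ nvCost cu co y.1 μm := by
      intro y
      rw [hCm y.1 y.2]
      have h1 := y.2.1; have h2 := y.2.2
      have h5 : (1 - q - ε) * (cu * (M - y.1)) + (q + ε) * (co * y.1) - (1 - q - ε) * (cu * M)
          = ε * (cu + co) * y.1 := by linear_combination (-(y.1:ℝ)) * hkey
      have h6 : 0 ≤ ε * (cu + co) * y.1 :=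
        mul_nonneg (by positivity) h1
      linarith
    refine le_antisymm ?_ (le_ciInf hlb)
    have := ciInf_le ⟨(1 - q - ε) * (cu * M), by rintro z ⟨y, rfl⟩; exact hlb y⟩
      (⟨0, hx0⟩ : Set.Icc (0:ℝ) M)
    rw [hCm 0 hx0] at this
    simpa [optNv] using this
  refine ⟨?_, ?_, ?_⟩
  · rw [hνt, hμp]
    have := tv_two_point M 0 (1 - q) q (1 - q + ε) (q - ε)
      (by linarith) (by linarith) (by linarith) (by linarith) hM0 (by ring)
    rw [this, show q - (q - ε) = ε by ring, abs_of_pos hε]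
  · rw [hνt, hμm]
    have := tv_two_point M 0 (1 - q) q (1 - q - ε) (q + ε)
      (by linarith) (by linarith) (by linarith) (by linarith) hM0 (by ring)
    rw [this, show q - (q + ε) = -ε by ring, abs_neg, abs_of_pos hε]
  · intro x hx
    rw [hCp x hx, hCm x hx, hOp, hOm]
    linear_combination ((M - 2*x)/2) * hkey

end
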